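/- Fix n ≥ 1 and let Q be either the set Av_n(132,312) partially ordered by the right weak order, or the set AltAv_n(123) partially ordered by the left weak order. Then for any σ, σ′ ∈ Q, the pair {σ, σ′} has a greatest lower bound π ∈ Q and a least upper bound ρ ∈ Q (with respect to the restricted order), and the corresponding permutation matrices satisfy M_σ + M_{σ′} = M_π + M_ρ. -/

import Mathlib

/-- `σ` contains the pattern `π`. -/
def containsPattern {n k : ℕ} (σ : Equiv.Perm (Fin n)) (π : Equiv.Perm (Fin k)) : Prop :=
  ∃ f : Fin k → Fin n, StrictMono f ∧ ∀ a b : Fin k, σ (f a) < σ (f b) ↔ π a < π b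

/-- The pattern 123. -/
def p123 : Equiv.Perm (Fin 3) := 1
/-- The pattern 132. -/
def p132 : Equiv.Perm (Fin 3) := Equiv.swap 1 2
/-- The pattern 312. -/
def p312 : Equiv.Perm (Fin 3) := (finRotate 3)⁻¹

/-- `Av_n(132,312)`. -/
def Av132312 (n : ℕ) : Set (Equiv.Perm (Fin n)) :=
  {σ : Equiv.Perm (Fin n) | ¬ containsPattern σ p132 ∧ ¬ containsPattern σ p312}

/-- `σ` is alternating (up-down): zero-based, `σ(j) < σ(j+1)` for even `j` and
`σ(j) > σ(j+1)` for odd `j`. -/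
def Alternating {n : ℕ} (σ : Equiv.Perm (Fin n)) : Prop :=
  ∀ (j : ℕ) (h : j + 1 < n),
    (Even j → σ ⟨j, by omega⟩ < σ ⟨j + 1, h⟩) ∧
    (Odd j → σ ⟨j + 1, h⟩ < σ ⟨j, by omega⟩)

/-- `AltAv_n(123)`: alternating permutations avoiding 123. -/
def AltAv123 (n : ℕ) : Set (Equiv.Perm (Fin n)) :=
  {σ : Equiv.Perm (Fin n) | Alternating σ ∧ ¬ containsPattern σ p123}

/-- The inversion (position) set of `σ` (left weak order: `σ ≤_L τ ↔ InvSet σ ⊆ InvSet τ`). -/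
def InvSet {n : ℕ} (σ : Equiv.Perm (Fin n)) : Set (Fin n × Fin n) :=
  {p | p.1 < p.2 ∧ σ p.2 < σ p.1}

/-- The inversion value set of `σ` (right weak order: `σ ≤_R τ ↔ Invv σ ⊆ Invv τ`). -/
def Invv {n : ℕ} (σ : Equiv.Perm (Fin n)) : Set (Fin n × Fin n) :=
  {p | ∃ i j : Fin n, i < j ∧ σ j < σ i ∧ p = (σ j, σ i)}

/-- The permutation matrix of `σ`, viewed as a vector in `ℝ^{n×n}`. -/
def permMatrix {n : ℕ} (σ : Equiv.Perm (Fin n)) : Fin n × Fin n → ℝ :=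
  fun p => if σ p.1 = p.2 then 1 else 0

set_option linter.unusedVariables false
set_option linter.unreachableTactic false
set_option linter.unusedTactic false
set_option linter.unnecessarySeqFocus false

namespace S16
open Finset

variable {n : ℕ}

lemma card_lt_val (σ : Equiv.Perm (Fin n)) (i : Fin n) :
    ((univ : Finset (Fin n)).filter (fun j => σ j < σ i)).card = ((σ i : ℕ)) := by
  classical
  have h1 : ((univ : Finset (Fin n)).filter (fun j => σ j < σ i)).image σ
      = (univ : Finset (Fin n)).filter (fun v => v < σ i) := by
    ext v
    simp only [mem_image, mem_filter, mem_univ, true_and]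
    constructor
    · rintro ⟨j, hj, rfl⟩; exact hj
    · intro hv; exact ⟨σ.symm v, by simpa using hv, by simp⟩
  have h2 := Finset.card_image_of_injective
    ((univ : Finset (Fin n)).filter (fun j => σ j < σ i)) σ.injective
  rw [h1] at h2
  rw [← h2]
  have h3 : (univ : Finset (Fin n)).filter (fun v => v < σ i) = Finset.Iio (σ i) := by
    ext v; simp
  rw [h3, Fin.card_Iio]

def Rel (E : Fin n × Fin n → Prop) (j i : Fin n) : Prop :=
  (j < i ∧ ¬ E (j, i)) ∨ (i < j ∧ E (i, j))

lemma rel_irrefl (E : Fin n × Fin n → Prop) (i : Fin n) : ¬ Rel E i i := by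
  rintro (⟨h, -⟩ | ⟨h, -⟩) <;> exact lt_irrefl _ h

lemma rel_total (E : Fin n × Fin n → Prop) {i j : Fin n} (h : i ≠ j) :
    Rel E i j ∨ Rel E j i := by
  rcases lt_trichotomy i j with h' | h' | h'
  · by_cases hE : E (i, j)
    · exact Or.inr (Or.inr ⟨h', hE⟩)
    · exact Or.inl (Or.inl ⟨h', hE⟩)
  · exact absurd h' h
  · by_cases hE : E (j, i)
    · exact Or.inl (Or.inr ⟨h', hE⟩)
    · exact Or.inr (Or.inl ⟨h', hE⟩)

lemma rel_trans_of (E : Fin n × Fin n → Prop)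
    (hT1 : ∀ i j k : Fin n, i < j → j < k → E (i, j) → E (j, k) → E (i, k))
    (hT2 : ∀ i j k : Fin n, i < j → j < k → E (i, k) → E (i, j) ∨ E (j, k)) :
    ∀ a b c : Fin n, Rel E a b → Rel E b c → Rel E a c := by
  rintro a b c (⟨hab, hnE⟩ | ⟨hba, hE⟩) (⟨hbc, hnE'⟩ | ⟨hcb, hE'⟩)
  · refine Or.inl ⟨hab.trans hbc, fun hE => ?_⟩
    rcases hT2 a b c hab hbc hE with h | h
    · exact hnE h
    · exact hnE' h
  · rcases lt_trichotomy a c with h' | h' | h'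
    · refine Or.inl ⟨h', fun hE => ?_⟩
      exact hnE (hT1 a c b h' hcb hE hE')
    · subst h'; exact absurd hE' hnE
    · refine Or.inr ⟨h', ?_⟩
      rcases hT2 c a b h' hab hE' with h | h
      · exact h
      · exact absurd h hnE
  · rcases lt_trichotomy a c with h' | h' | h'
    · refine Or.inl ⟨h', fun hEac => ?_⟩
      exact hnE' (hT1 b a c hba h' hE hEac)
    · subst h'; exact absurd hE hnE'
    · refine Or.inr ⟨h', ?_⟩
      rcases hT2 b c a hbc h' hE with h | h
      · exact absurd h hnE'
      · exact h
  · exact Or.inr ⟨hcb.trans hba, hT1 c b a hcb hba hE' hE⟩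

open scoped Classical in
noncomputable def bFun (E : Fin n × Fin n → Prop) : Fin n → Fin n := fun i =>
  ⟨((univ : Finset (Fin n)).filter (fun j => Rel E j i)).card, by
    have hsub : ((univ : Finset (Fin n)).filter (fun j => Rel E j i)) ⊆ univ.erase i := by
      intro j hj
      rw [mem_filter] at hj
      rw [mem_erase]
      refine ⟨fun h => ?_, mem_univ j⟩
      subst h; exact rel_irrefl E j hj.2
    calc ((univ : Finset (Fin n)).filter (fun j => Rel E j i)).card
        ≤ (univ.erase i).card := Finset.card_le_card hsub
      _ < univ.card := Finset.card_erase_lt_of_mem (mem_univ i)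
      _ = n := by simp⟩

variable {E : Fin n × Fin n → Prop}
  (hT : ∀ a b c : Fin n, Rel E a b → Rel E b c → Rel E a c)

include hT in
lemma bFun_lt {j i : Fin n} (h : Rel E j i) : bFun E j < bFun E i := by
  classical
  have hss : ((univ : Finset (Fin n)).filter (fun k => Rel E k j))
      ⊂ ((univ : Finset (Fin n)).filter (fun k => Rel E k i)) := by
    refine Finset.ssubset_iff_of_subset ?_ |>.mpr ?_
    · intro k hk
      rw [mem_filter] at hk ⊢
      exact ⟨mem_univ k, hT k j i hk.2 h⟩
    · exact ⟨j, by simpa using h, by simp [rel_irrefl E j]⟩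
  have := Finset.card_lt_card hss
  simpa [bFun, Fin.lt_def] using this

include hT in
lemma bFun_inj : Function.Injective (bFun E) := by
  intro i j hij
  by_contra hne
  rcases rel_total E hne with h | h
  · exact absurd hij (Fin.ne_of_lt (bFun_lt hT h))
  · exact absurd hij (Fin.ne_of_lt (bFun_lt hT h)).symm

noncomputable def bPerm (E : Fin n × Fin n → Prop)
    (hT : ∀ a b c : Fin n, Rel E a b → Rel E b c → Rel E a c) : Equiv.Perm (Fin n) :=
  Equiv.ofBijective (bFun E) ((Finite.injective_iff_bijective).mp (bFun_inj hT))

lemma bPerm_apply (i : Fin n) : bPerm E hT i = bFun E i := rfl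

include hT in
lemma bPerm_lt_iff {j i : Fin n} : bPerm E hT j < bPerm E hT i ↔ Rel E j i := by
  constructor
  · intro h
    by_contra hn
    have hne : j ≠ i := by rintro rfl; exact lt_irrefl _ h
    rcases rel_total E hne with h' | h'
    · exact hn h'
    · exact absurd h (asymm (bFun_lt hT h'))
  · exact fun h => bFun_lt hT h

include hT in
lemma bPerm_invSet (hE0 : ∀ p, E p → p.1 < p.2) :
    InvSet (bPerm E hT) = {p | E p} := by
  ext ⟨i, j⟩
  simp only [InvSet, Set.mem_setOf_eq]
  constructor
  · rintro ⟨hij, hlt⟩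
    rcases (bPerm_lt_iff hT).mp hlt with ⟨h1, -⟩ | ⟨-, h2⟩
    · exact absurd hij (asymm h1)
    · exact h2
  · intro hE
    have hij := hE0 _ hE
    exact ⟨hij, (bPerm_lt_iff hT).mpr (Or.inr ⟨hij, hE⟩)⟩

include hT in
lemma bPerm_eq (σ : Equiv.Perm (Fin n)) (i : Fin n)
    (h : ∀ j, Rel E j i ↔ σ j < σ i) : bPerm E hT i = σ i := by
  classical
  apply Fin.ext
  have : ((univ : Finset (Fin n)).filter (fun j => Rel E j i))
      = ((univ : Finset (Fin n)).filter (fun j => σ j < σ i)) := by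
    apply Finset.filter_congr
    intro j _
    simp [h j]
  calc (bPerm E hT i : ℕ)
      = ((univ : Finset (Fin n)).filter (fun j => Rel E j i)).card := by
        simp [bPerm_apply, bFun]
    _ = ((univ : Finset (Fin n)).filter (fun j => σ j < σ i)).card := by rw [this]
    _ = (σ i : ℕ) := card_lt_val σ i



variable {n : ℕ}

def H132 (σ : Equiv.Perm (Fin n)) : Prop :=
  ∃ i j k : Fin n, i < j ∧ j < k ∧ σ i < σ k ∧ σ k < σ j
def H231 (σ : Equiv.Perm (Fin n)) : Prop :=
  ∃ i j k : Fin n, i < j ∧ j < k ∧ σ k < σ i ∧ σ i < σ j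
def H312 (σ : Equiv.Perm (Fin n)) : Prop :=
  ∃ i j k : Fin n, i < j ∧ j < k ∧ σ j < σ k ∧ σ k < σ i
def H123 (σ : Equiv.Perm (Fin n)) : Prop :=
  ∃ i j k : Fin n, i < j ∧ j < k ∧ σ i < σ j ∧ σ j < σ k

lemma strictMono_triple {i j k : Fin n} (h1 : i < j) (h2 : j < k) :
    StrictMono ![i, j, k] := by
  intro a b hab
  fin_cases a <;> fin_cases b <;>
    simp_all [Matrix.cons_val_zero, Matrix.cons_val_one, Matrix.head_cons] <;>
    first
      | exact h1 | exact h2 | exact h1.trans h2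
      | exact absurd hab (by decide)

lemma contains123_iff (σ : Equiv.Perm (Fin n)) :
    containsPattern σ p123 ↔ H123 σ := by
  constructor
  · rintro ⟨f, hf, hc⟩
    exact ⟨f 0, f 1, f 2, hf (by decide), hf (by decide),
      (hc 0 1).2 (by decide), (hc 1 2).2 (by decide)⟩
  · rintro ⟨i, j, k, h1, h2, v1, v2⟩
    refine ⟨![i, j, k], strictMono_triple h1 h2, ?_⟩
    intro a b
    fin_cases a <;> fin_cases b
    · exact iff_of_false (lt_irrefl _) (by decide)
    · exact iff_of_true v1 (by decide)
    · exact iff_of_true (v1.trans v2) (by decide)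
    · exact iff_of_false (asymm v1) (by decide)
    · exact iff_of_false (lt_irrefl _) (by decide)
    · exact iff_of_true v2 (by decide)
    · exact iff_of_false (asymm (v1.trans v2)) (by decide)
    · exact iff_of_false (asymm v2) (by decide)
    · exact iff_of_false (lt_irrefl _) (by decide)

lemma contains132_iff (σ : Equiv.Perm (Fin n)) :
    containsPattern σ p132 ↔ H132 σ := by
  constructor
  · rintro ⟨f, hf, hc⟩
    exact ⟨f 0, f 1, f 2, hf (by decide), hf (by decide),
      (hc 0 2).2 (by decide), (hc 2 1).2 (by decide)⟩
  · rintro ⟨i, j, k, h1, h2, v1, v2⟩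
    refine ⟨![i, j, k], strictMono_triple h1 h2, ?_⟩
    intro a b
    fin_cases a <;> fin_cases b
    · exact iff_of_false (lt_irrefl _) (by decide)
    · exact iff_of_true (v1.trans v2) (by decide)
    · exact iff_of_true v1 (by decide)
    · exact iff_of_false (asymm (v1.trans v2)) (by decide)
    · exact iff_of_false (lt_irrefl _) (by decide)
    · exact iff_of_false (asymm v2) (by decide)
    · exact iff_of_false (asymm v1) (by decide)
    · exact iff_of_true v2 (by decide)
    · exact iff_of_false (lt_irrefl _) (by decide)

lemma contains312_iff (σ : Equiv.Perm (Fin n)) :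
    containsPattern σ p312 ↔ H312 σ := by
  constructor
  · rintro ⟨f, hf, hc⟩
    exact ⟨f 0, f 1, f 2, hf (by decide), hf (by decide),
      (hc 1 2).2 (by decide), (hc 2 0).2 (by decide)⟩
  · rintro ⟨i, j, k, h1, h2, v1, v2⟩
    refine ⟨![i, j, k], strictMono_triple h1 h2, ?_⟩
    intro a b
    fin_cases a <;> fin_cases b
    · exact iff_of_false (lt_irrefl _) (by decide)
    · exact iff_of_false (asymm (v1.trans v2)) (by decide)
    · exact iff_of_false (asymm v2) (by decide)
    · exact iff_of_true (v1.trans v2) (by decide)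
    · exact iff_of_false (lt_irrefl _) (by decide)
    · exact iff_of_true v1 (by decide)
    · exact iff_of_true v2 (by decide)
    · exact iff_of_false (asymm v1) (by decide)
    · exact iff_of_false (lt_irrefl _) (by decide)

lemma H132_inv_aux (τ : Equiv.Perm (Fin n)) (h : H132 τ) : H132 τ⁻¹ := by
  obtain ⟨a, b, c, h1, h2, v1, v2⟩ := h
  exact ⟨τ a, τ c, τ b, v1, v2, by simpa using h1, by simpa using h2⟩

lemma H132_inv (τ : Equiv.Perm (Fin n)) : H132 τ⁻¹ ↔ H132 τ := by
  constructor
  · intro h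
    have := H132_inv_aux τ⁻¹ h
    simpa using this
  · exact H132_inv_aux τ

lemma H312_inv (τ : Equiv.Perm (Fin n)) : H312 τ⁻¹ ↔ H231 τ := by
  constructor
  · rintro ⟨i, j, k, h1, h2, v1, v2⟩
    exact ⟨τ⁻¹ j, τ⁻¹ k, τ⁻¹ i, v1, v2, by simpa using h1, by simpa using h2⟩
  · rintro ⟨a, b, c, h1, h2, v1, v2⟩
    exact ⟨τ c, τ a, τ b, v1, v2, by simpa using h1, by simpa using h2⟩

lemma invv_eq (σ : Equiv.Perm (Fin n)) : Invv σ = InvSet σ⁻¹ := by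
  ext p
  simp only [Invv, InvSet, Set.mem_setOf_eq]
  constructor
  · rintro ⟨i, j, hij, hv, rfl⟩
    exact ⟨hv, by simpa using hij⟩
  · rintro ⟨hab, hv⟩
    exact ⟨σ⁻¹ p.2, σ⁻¹ p.1, hv, by simpa using hab, by simp⟩

end S16
section PartA

variable {n : ℕ}

lemma vtri (σ : Equiv.Perm (Fin n)) {a b : Fin n} (h : a ≠ b) : σ a < σ b ∨ σ b < σ a := by
  rcases lt_trichotomy (σ a) (σ b) with h' | h' | h'
  · exact Or.inl h'
  · exact absurd (σ.injective h') h
  · exact Or.inr h'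

def EI (τ τ' : Equiv.Perm (Fin n)) : Fin n × Fin n → Prop :=
  fun p => p ∈ InvSet τ ∧ p ∈ InvSet τ'
def EU (τ τ' : Equiv.Perm (Fin n)) : Fin n × Fin n → Prop :=
  fun p => p ∈ InvSet τ ∨ p ∈ InvSet τ'

lemma mem_invSet (σ : Equiv.Perm (Fin n)) {i j : Fin n} :
    (i, j) ∈ InvSet σ ↔ i < j ∧ σ j < σ i := Iff.rfl

lemma EI_lt {τ τ' : Equiv.Perm (Fin n)} {p : Fin n × Fin n} (h : EI τ τ' p) : p.1 < p.2 :=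
  h.1.1
lemma EU_lt {τ τ' : Equiv.Perm (Fin n)} {p : Fin n × Fin n} (h : EU τ τ' p) : p.1 < p.2 := by
  rcases h with h | h <;> exact h.1

lemma EI_comm (τ τ' : Equiv.Perm (Fin n)) (p : Fin n × Fin n) : EI τ' τ p ↔ EI τ τ' p :=
  and_comm
lemma EU_comm (τ τ' : Equiv.Perm (Fin n)) (p : Fin n × Fin n) : EU τ' τ p ↔ EU τ τ' p :=
  or_comm

lemma rel_congr_E {E E' : Fin n × Fin n → Prop} (h : ∀ p, E p ↔ E' p) (j i : Fin n) :
    S16.Rel E j i ↔ S16.Rel E' j i := by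
  unfold S16.Rel
  rw [h, h]

lemma T1I (τ τ' : Equiv.Perm (Fin n)) :
    ∀ i j k : Fin n, i < j → j < k → EI τ τ' (i, j) → EI τ τ' (j, k) → EI τ τ' (i, k) := by
  rintro i j k hij hjk ⟨h1, h2⟩ ⟨h3, h4⟩
  exact ⟨⟨hij.trans hjk, h3.2.trans h1.2⟩, ⟨hij.trans hjk, h4.2.trans h2.2⟩⟩

lemma T2U (τ τ' : Equiv.Perm (Fin n)) :
    ∀ i j k : Fin n, i < j → j < k → EU τ τ' (i, k) → EU τ τ' (i, j) ∨ EU τ τ' (j, k) := by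
  rintro i j k hij hjk (h | h)
  · rcases vtri τ (Fin.ne_of_lt hij) with h' | h'
    · exact Or.inr (Or.inl ⟨hjk, h.2.trans h'⟩)
    · exact Or.inl (Or.inl ⟨hij, h'⟩)
  · rcases vtri τ' (Fin.ne_of_lt hij) with h' | h'
    · exact Or.inr (Or.inr ⟨hjk, h.2.trans h'⟩)
    · exact Or.inl (Or.inr ⟨hij, h'⟩)

section withAvoid
variable {τ τ' : Equiv.Perm (Fin n)}
  (hA : ¬ S16.H132 τ) (hB : ¬ S16.H231 τ) (hA' : ¬ S16.H132 τ') (hB' : ¬ S16.H231 τ')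

include hB hB' in
lemma T2I : ∀ i j k : Fin n, i < j → j < k → EI τ τ' (i, k) →
    EI τ τ' (i, j) ∨ EI τ τ' (j, k) := by
  rintro i j k hij hjk ⟨h1, h2⟩
  by_cases c1 : τ j < τ i
  · by_cases c2 : τ' j < τ' i
    · exact Or.inl ⟨⟨hij, c1⟩, ⟨hij, c2⟩⟩
    · rcases vtri τ' (Fin.ne_of_lt hij) with h' | h'
      · exact absurd ⟨i, j, k, hij, hjk, h2.2, h'⟩ hB'
      · exact absurd h' c2
  · rcases vtri τ (Fin.ne_of_lt hij) with h' | h'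
    · exact absurd ⟨i, j, k, hij, hjk, h1.2, h'⟩ hB
    · exact absurd h' c1

include hA hA' in
lemma T1U : ∀ i j k : Fin n, i < j → j < k → EU τ τ' (i, j) → EU τ τ' (j, k) →
    EU τ τ' (i, k) := by
  rintro i j k hij hjk h1 h2
  by_contra hik
  have hik1 : ¬ τ k < τ i := fun h => hik (Or.inl ⟨hij.trans hjk, h⟩)
  have hik2 : ¬ τ' k < τ' i := fun h => hik (Or.inr ⟨hij.trans hjk, h⟩)
  have vik : τ i < τ k := (vtri τ (Fin.ne_of_lt (hij.trans hjk))).resolve_right hik1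
  have vik' : τ' i < τ' k := (vtri τ' (Fin.ne_of_lt (hij.trans hjk))).resolve_right hik2
  rcases h1 with h1 | h1
  · -- τ j < τ i
    have hjknot : ¬ τ k < τ j := fun h => hik1 (h.trans h1.2)
    have h2' : τ' k < τ' j := by
      rcases h2 with h2 | h2
      · exact absurd h2.2 hjknot
      · exact h2.2
    have : τ' i < τ' j := by
      rcases vtri τ' (Fin.ne_of_lt hij) with h' | h'
      · exact h'
      · exact absurd (h2'.trans h') hik2
    exact absurd ⟨i, j, k, hij, hjk, vik', h2'⟩ hA'
  · -- τ' j < τ' i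
    have hjknot : ¬ τ' k < τ' j := fun h => hik2 (h.trans h1.2)
    have h2' : τ k < τ j := by
      rcases h2 with h2 | h2
      · exact h2.2
      · exact absurd h2.2 hjknot
    exact absurd ⟨i, j, k, hij, hjk, vik, h2'⟩ hA

end withAvoid

end PartA
section PartA2

variable {n : ℕ} {τ τ' : Equiv.Perm (Fin n)}
  (hA : ¬ S16.H132 τ) (hB : ¬ S16.H231 τ) (hA' : ¬ S16.H132 τ') (hB' : ¬ S16.H231 τ')

-- helper: middle element is largest on an increasing position triple forces 132 or 231
lemma midMax (σ : Equiv.Perm (Fin n)) {a b c : Fin n} (h1 : a < b) (h2 : b < c)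
    (v1 : σ a < σ b) (v2 : σ c < σ b) : S16.H132 σ ∨ S16.H231 σ := by
  rcases vtri σ (Fin.ne_of_lt (h1.trans h2)) with h' | h'
  · exact Or.inl ⟨a, b, c, h1, h2, h', v2⟩
  · exact Or.inr ⟨a, b, c, h1, h2, h', v1⟩

def Wit (τ τ' : Equiv.Perm (Fin n)) (i : Fin n) : Prop :=
  ∃ j, (j < i ∧ τ i < τ j ∧ τ' j < τ' i) ∨ (i < j ∧ τ j < τ i ∧ τ' i < τ' j)

include hA hB hA' hB' in
lemma nestA_core (i : Fin n) : Wit τ τ' i → Wit τ' τ i → False := by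
  rintro ⟨j, (⟨hji, a1, a2⟩ | ⟨hij, a1, a2⟩)⟩ ⟨k, (⟨hki, b1, b2⟩ | ⟨hik, b1, b2⟩)⟩
  · -- col j, col k
    rcases lt_trichotomy j k with h | h | h
    · exact hA' ⟨j, k, i, h, hki, a2, b1⟩
    · subst h; exact absurd (b2.trans a1) (lt_irrefl _)
    · exact hA ⟨k, j, i, h, hji, b2, a1⟩
  · -- col j (j < i), row k (i < k)
    rcases midMax τ' hji hik a2 b1 with h | h
    · exact hA' h
    · exact hB' h
  · -- row j (i < j), col k (k < i)
    rcases midMax τ hki hij b2 a1 with h | h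
    · exact hA h
    · exact hB h
  · -- row j, row k
    rcases lt_trichotomy j k with h | h | h
    · exact hB' ⟨i, j, k, hij, h, b1, a2⟩
    · subst h; exact absurd (a1.trans b2) (lt_irrefl _)
    · exact hB ⟨i, k, j, hik, h, a1, b2⟩

-- if no witness at i, then EI rows/cols at i look like τ and EU like τ'
lemma noWit_rel {i : Fin n} (hW : ¬ Wit τ τ' i) :
    (∀ j, S16.Rel (EI τ τ') j i ↔ τ j < τ i) ∧ (∀ j, S16.Rel (EU τ τ') j i ↔ τ' j < τ' i) := by
  have key : ∀ j, (j < i → τ i < τ j → τ' i < τ' j) ∧ (i < j → τ j < τ i → τ' j < τ' i) := by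
    intro j
    constructor
    · intro h1 h2
      rcases vtri τ' (Fin.ne_of_lt h1).symm with h' | h'
      · exact h'
      · exact absurd ⟨j, Or.inl ⟨h1, h2, h'⟩⟩ hW
    · intro h1 h2
      rcases vtri τ' (Fin.ne_of_lt h1).symm with h' | h'
      · exact h'
      · exact absurd ⟨j, Or.inr ⟨h1, h2, h'⟩⟩ hW
  constructor
  · intro j
    rcases lt_trichotomy j i with h | h | h
    · have hne := Fin.ne_of_lt h
      constructor
      · rintro (⟨-, hE⟩ | ⟨h', -⟩)
        · rcases vtri τ hne with h' | h'
          · exact h'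
          · exact absurd ⟨⟨h, h'⟩, ⟨h, (key j).1 h h'⟩⟩ hE
        · exact absurd h' (asymm h)
      · intro hv
        exact Or.inl ⟨h, fun hE => asymm hv hE.1.2⟩
    · subst h
      constructor
      · intro h'; exact absurd h' (S16.rel_irrefl _ j)
      · intro h'; exact absurd h' (lt_irrefl _)
    · have hne := Fin.ne_of_lt h
      constructor
      · rintro (⟨h', -⟩ | ⟨-, hE⟩)
        · exact absurd h' (asymm h)
        · exact hE.1.2
      · intro hv
        exact Or.inr ⟨h, ⟨h, hv⟩, ⟨h, (key j).2 h hv⟩⟩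
  · intro j
    rcases lt_trichotomy j i with h | h | h
    · have hne := Fin.ne_of_lt h
      constructor
      · rintro (⟨-, hE⟩ | ⟨h', -⟩)
        · rcases vtri τ' hne with h' | h'
          · exact h'
          · exact absurd (Or.inr ⟨h, h'⟩) hE
        · exact absurd h' (asymm h)
      · intro hv
        refine Or.inl ⟨h, fun hE => ?_⟩
        rcases hE with hE | hE
        · exact asymm hv ((key j).1 h hE.2)
        · exact asymm hv hE.2
    · subst h
      constructor
      · intro h'; exact absurd h' (S16.rel_irrefl _ j)
      · intro h'; exact absurd h' (lt_irrefl _)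
    · constructor
      · rintro (⟨h', -⟩ | ⟨-, hE⟩)
        · exact absurd h' (asymm h)
        · rcases hE with hE | hE
          · exact (key j).2 h hE.2
          · exact hE.2
      · intro hv
        exact Or.inr ⟨h, Or.inr ⟨h, hv⟩⟩

include hA hB hA' hB' in
lemma nestA (i : Fin n) :
    ((∀ j, S16.Rel (EI τ τ') j i ↔ τ j < τ i) ∧ (∀ j, S16.Rel (EU τ τ') j i ↔ τ' j < τ' i)) ∨
    ((∀ j, S16.Rel (EI τ τ') j i ↔ τ' j < τ' i) ∧ (∀ j, S16.Rel (EU τ τ') j i ↔ τ j < τ i)) := by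
  by_cases hW : Wit τ τ' i
  · have hW' : ¬ Wit τ' τ i := fun h => nestA_core hA hB hA' hB' i hW h
    have := noWit_rel (τ := τ') (τ' := τ) hW'
    refine Or.inr ⟨fun j => ?_, fun j => ?_⟩
    · rw [rel_congr_E (fun p => (EI_comm τ τ' p).symm)]
      exact (this.1 j)
    · rw [rel_congr_E (fun p => (EU_comm τ τ' p).symm)]
      exact (this.2 j)
  · exact Or.inl (noWit_rel hW)

end PartA2
section PartA3

variable {n : ℕ}

lemma partA (τ τ' : Equiv.Perm (Fin n))
    (hA : ¬ S16.H132 τ) (hB : ¬ S16.H231 τ) (hA' : ¬ S16.H132 τ') (hB' : ¬ S16.H231 τ') :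
    ∃ π ρ : Equiv.Perm (Fin n),
      InvSet π = InvSet τ ∩ InvSet τ' ∧ InvSet ρ = InvSet τ ∪ InvSet τ' ∧
      ¬ S16.H132 π ∧ ¬ S16.H231 π ∧ ¬ S16.H132 ρ ∧ ¬ S16.H231 ρ ∧
      (∀ i, (π i = τ i ∧ ρ i = τ' i) ∨ (π i = τ' i ∧ ρ i = τ i)) := by
  classical
  have hTI : ∀ a b c : Fin n, S16.Rel (EI τ τ') a b → S16.Rel (EI τ τ') b c →
      S16.Rel (EI τ τ') a c :=
    S16.rel_trans_of _ (T1I τ τ') (T2I hB hB')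
  have hTU : ∀ a b c : Fin n, S16.Rel (EU τ τ') a b → S16.Rel (EU τ τ') b c →
      S16.Rel (EU τ τ') a c :=
    S16.rel_trans_of _ (T1U hA hA') (T2U τ τ')
  refine ⟨S16.bPerm (EI τ τ') hTI, S16.bPerm (EU τ τ') hTU, ?_, ?_, ?_, ?_, ?_, ?_, ?_⟩
  · rw [S16.bPerm_invSet hTI (fun p h => EI_lt h)]
    exact Set.ext fun p => Iff.rfl
  · rw [S16.bPerm_invSet hTU (fun p h => EU_lt h)]
    exact Set.ext fun p => Iff.rfl
  · -- ¬ H132 π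
    rintro ⟨i, j, k, h1, h2, v1, v2⟩
    have hjk : EI τ τ' (j, k) := by
      rcases (S16.bPerm_lt_iff hTI).mp v2 with ⟨h', -⟩ | ⟨-, hE⟩
      · exact absurd h' (asymm h2)
      · exact hE
    have hij : ¬ EI τ τ' (i, j) := by
      rcases (S16.bPerm_lt_iff hTI).mp (v1.trans v2) with ⟨-, hE⟩ | ⟨h', -⟩
      · exact hE
      · exact absurd h' (asymm h1)
    rcases vtri τ (Fin.ne_of_lt (h1.trans h2)) with c | c
    · exact hA ⟨i, j, k, h1, h2, c, hjk.1.2⟩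
    · rcases vtri τ' (Fin.ne_of_lt (h1.trans h2)) with c' | c'
      · exact hA' ⟨i, j, k, h1, h2, c', hjk.2.2⟩
      · rcases vtri τ (Fin.ne_of_lt h1) with d | d
        · exact hB ⟨i, j, k, h1, h2, c, d⟩
        · rcases vtri τ' (Fin.ne_of_lt h1) with d' | d'
          · exact hB' ⟨i, j, k, h1, h2, c', d'⟩
          · exact hij ⟨⟨h1, d⟩, ⟨h1, d'⟩⟩
  · -- ¬ H231 π
    rintro ⟨i, j, k, h1, h2, v1, v2⟩
    have hik : EI τ τ' (i, k) := by
      rcases (S16.bPerm_lt_iff hTI).mp v1 with ⟨h', -⟩ | ⟨-, hE⟩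
      · exact absurd h' (asymm (h1.trans h2))
      · exact hE
    have hij : ¬ EI τ τ' (i, j) := by
      rcases (S16.bPerm_lt_iff hTI).mp v2 with ⟨-, hE⟩ | ⟨h', -⟩
      · exact hE
      · exact absurd h' (asymm h1)
    by_cases c : τ j < τ i
    · have c' : ¬ τ' j < τ' i := fun h => hij ⟨⟨h1, c⟩, ⟨h1, h⟩⟩
      have d' : τ' i < τ' j := (vtri τ' (Fin.ne_of_lt h1)).resolve_right c'
      exact hB' ⟨i, j, k, h1, h2, hik.2.2, d'⟩
    · have d : τ i < τ j := (vtri τ (Fin.ne_of_lt h1)).resolve_right c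
      exact hB ⟨i, j, k, h1, h2, hik.1.2, d⟩
  · -- ¬ H132 ρ
    rintro ⟨i, j, k, h1, h2, v1, v2⟩
    have hjk : EU τ τ' (j, k) := by
      rcases (S16.bPerm_lt_iff hTU).mp v2 with ⟨h', -⟩ | ⟨-, hE⟩
      · exact absurd h' (asymm h2)
      · exact hE
    have hik : ¬ EU τ τ' (i, k) := by
      rcases (S16.bPerm_lt_iff hTU).mp v1 with ⟨-, hE⟩ | ⟨h', -⟩
      · exact hE
      · exact absurd h' (asymm (h1.trans h2))
    have vik : τ i < τ k :=
      (vtri τ (Fin.ne_of_lt (h1.trans h2))).resolve_right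
        (fun h => hik (Or.inl ⟨h1.trans h2, h⟩))
    have vik' : τ' i < τ' k :=
      (vtri τ' (Fin.ne_of_lt (h1.trans h2))).resolve_right
        (fun h => hik (Or.inr ⟨h1.trans h2, h⟩))
    rcases hjk with h | h
    · exact hA ⟨i, j, k, h1, h2, vik, h.2⟩
    · exact hA' ⟨i, j, k, h1, h2, vik', h.2⟩
  · -- ¬ H231 ρ
    rintro ⟨i, j, k, h1, h2, v1, v2⟩
    have hjk : EU τ τ' (j, k) := by
      rcases (S16.bPerm_lt_iff hTU).mp (v1.trans v2) with ⟨h', -⟩ | ⟨-, hE⟩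
      · exact absurd h' (asymm h2)
      · exact hE
    have hij : ¬ EU τ τ' (i, j) := by
      rcases (S16.bPerm_lt_iff hTU).mp v2 with ⟨-, hE⟩ | ⟨h', -⟩
      · exact hE
      · exact absurd h' (asymm h1)
    have vij : τ i < τ j :=
      (vtri τ (Fin.ne_of_lt h1)).resolve_right (fun h => hij (Or.inl ⟨h1, h⟩))
    have vij' : τ' i < τ' j :=
      (vtri τ' (Fin.ne_of_lt h1)).resolve_right (fun h => hij (Or.inr ⟨h1, h⟩))
    rcases hjk with h | h
    · by_cases c : τ k < τ i
      · exact hB ⟨i, j, k, h1, h2, c, vij⟩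
      · have d : τ i < τ k := (vtri τ (Fin.ne_of_lt (h1.trans h2))).resolve_right c
        exact hA ⟨i, j, k, h1, h2, d, h.2⟩
    · by_cases c : τ' k < τ' i
      · exact hB' ⟨i, j, k, h1, h2, c, vij'⟩
      · have d : τ' i < τ' k := (vtri τ' (Fin.ne_of_lt (h1.trans h2))).resolve_right c
        exact hA' ⟨i, j, k, h1, h2, d, h.2⟩
  · -- pointwise values
    intro i
    rcases nestA hA hB hA' hB' i with ⟨e1, e2⟩ | ⟨e1, e2⟩
    · exact Or.inl ⟨S16.bPerm_eq hTI τ i e1, S16.bPerm_eq hTU τ' i e2⟩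
    · exact Or.inr ⟨S16.bPerm_eq hTI τ' i e1, S16.bPerm_eq hTU τ i e2⟩

end PartA3
section PartB

variable {n : ℕ} {σ σ' : Equiv.Perm (Fin n)}

/-- property (O): entries after an odd position are smaller -/
def PO (σ : Equiv.Perm (Fin n)) : Prop :=
  ∀ p q : Fin n, (p : ℕ) % 2 = 1 → p < q → σ q < σ p
/-- property (E): entries before an interior even position are bigger -/
def PE (σ : Equiv.Perm (Fin n)) : Prop :=
  ∀ p q : Fin n, (q : ℕ) % 2 = 0 → (q : ℕ) + 1 < n → p < q → σ q < σ p

variable (hO : PO σ) (hEv : PE σ) (hO' : PO σ') (hEv' : PE σ')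

include hO hEv hO' hEv' in
lemma T2I_B : ∀ i j k : Fin n, i < j → j < k → EI σ σ' (i, k) →
    EI σ σ' (i, j) ∨ EI σ σ' (j, k) := by
  intro i j k hij hjk _
  rcases Nat.mod_two_eq_zero_or_one (j : ℕ) with hp | hp
  · have hjn : (j : ℕ) + 1 < n := by
      have := k.isLt; have := (Fin.lt_def).mp hjk; omega
    exact Or.inl ⟨⟨hij, hEv i j hp hjn hij⟩, ⟨hij, hEv' i j hp hjn hij⟩⟩
  · exact Or.inr ⟨⟨hjk, hO j k hp hjk⟩, ⟨hjk, hO' j k hp hjk⟩⟩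

include hO hEv hO' hEv' in
lemma T1U_B : ∀ i j k : Fin n, i < j → j < k → EU σ σ' (i, j) → EU σ σ' (j, k) →
    EU σ σ' (i, k) := by
  intro i j k hij hjk h1 h2
  rcases Nat.mod_two_eq_zero_or_one (j : ℕ) with hp | hp
  · have hjn : (j : ℕ) + 1 < n := by
      have := k.isLt; have := (Fin.lt_def).mp hjk; omega
    rcases h2 with h | h
    · exact Or.inl ⟨hij.trans hjk, h.2.trans (hEv i j hp hjn hij)⟩
    · exact Or.inr ⟨hij.trans hjk, h.2.trans (hEv' i j hp hjn hij)⟩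
  · rcases h1 with h | h
    · exact Or.inl ⟨hij.trans hjk, (hO j k hp hjk).trans h.2⟩
    · exact Or.inr ⟨hij.trans hjk, (hO' j k hp hjk).trans h.2⟩

include hO hEv hO' hEv' in
lemma nestB_colcol {i j k : Fin n} (hji : j < i) (hki : k < i)
    (a1 : σ i < σ j) (a2 : σ' j < σ' i) (b1 : σ' i < σ' k) (b2 : σ k < σ i) : False := by
  rcases Nat.mod_two_eq_zero_or_one (j : ℕ) with hpj | hpj
  · rcases Nat.mod_two_eq_zero_or_one (k : ℕ) with hpk | hpk
    · -- both even
      rcases lt_trichotomy j k with h | h | h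
      · have hkn : (k : ℕ) + 1 < n := by
          have := i.isLt; have := (Fin.lt_def).mp hki; omega
        exact absurd (a2.trans b1) (asymm (hEv' j k hpk hkn h))
      · subst h; exact absurd (a1.trans b2) (lt_irrefl _)
      · have hjn : (j : ℕ) + 1 < n := by
          have := i.isLt; have := (Fin.lt_def).mp hji; omega
        exact absurd (b2.trans a1) (asymm (hEv k j hpj hjn h))
    · exact absurd (hO k i hpk hki) (asymm b2)
  · exact absurd (hO' j i hpj hji) (asymm a2)

include hO hEv hO' hEv' in
lemma nestB_core (i : Fin n) : Wit σ σ' i → Wit σ' σ i → False := by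
  rintro ⟨j, hj⟩ ⟨k, hk⟩
  rcases Nat.mod_two_eq_zero_or_one (i : ℕ) with hi | hi
  · by_cases hin : (i : ℕ) + 1 < n
    · -- i even interior: no column witnesses
      rcases hj with ⟨hji, a1, a2⟩ | ⟨hij, a1, a2⟩
      · exact absurd (hEv' j i hi hin hji) (asymm a2)
      · rcases hk with ⟨hki, b1, b2⟩ | ⟨hik, b1, b2⟩
        · exact absurd (hEv k i hi hin hki) (asymm b2)
        · -- row, row
          rcases lt_trichotomy j k with h | h | h
          · rcases Nat.mod_two_eq_zero_or_one (j : ℕ) with hp | hp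
            · have hjn : (j : ℕ) + 1 < n := by
                have := k.isLt; have := (Fin.lt_def).mp h; omega
              exact absurd (hEv' i j hp hjn hij) (asymm a2)
            · exact absurd ((hO j k hp h).trans a1) (asymm b2)
          · subst h; exact absurd (a1.trans b2) (lt_irrefl _)
          · rcases Nat.mod_two_eq_zero_or_one (k : ℕ) with hp | hp
            · have hkn : (k : ℕ) + 1 < n := by
                have := j.isLt; have := (Fin.lt_def).mp h; omega
              exact absurd (hEv i k hp hkn hik) (asymm b2)
            · exact absurd (b1.trans a2) (asymm (hO' k j hp h))
    · -- i is the last position (even): no row witnesses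
      rcases hj with ⟨hji, a1, a2⟩ | ⟨hij, a1, a2⟩
      · rcases hk with ⟨hki, b1, b2⟩ | ⟨hik, b1, b2⟩
        · exact nestB_colcol hO hEv hO' hEv' hji hki a1 a2 b1 b2
        · have := j.isLt; have := (Fin.lt_def).mp hik; have := k.isLt; omega
      · have := (Fin.lt_def).mp hij; have := j.isLt; omega
  · -- i odd: no row witnesses
    rcases hj with ⟨hji, a1, a2⟩ | ⟨hij, a1, a2⟩
    · rcases hk with ⟨hki, b1, b2⟩ | ⟨hik, b1, b2⟩
      · exact nestB_colcol hO hEv hO' hEv' hji hki a1 a2 b1 b2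
      · exact absurd (hO i k hi hik) (asymm b2)
    · exact absurd (hO' i j hi hij) (asymm a2)

include hO hEv hO' hEv' in
lemma nestB (i : Fin n) :
    ((∀ j, S16.Rel (EI σ σ') j i ↔ σ j < σ i) ∧ (∀ j, S16.Rel (EU σ σ') j i ↔ σ' j < σ' i)) ∨
    ((∀ j, S16.Rel (EI σ σ') j i ↔ σ' j < σ' i) ∧ (∀ j, S16.Rel (EU σ σ') j i ↔ σ j < σ i)) := by
  by_cases hW : Wit σ σ' i
  · have hW' : ¬ Wit σ' σ i := fun h => nestB_core hO hEv hO' hEv' i hW h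
    have := noWit_rel (τ := σ') (τ' := σ) hW'
    refine Or.inr ⟨fun j => ?_, fun j => ?_⟩
    · rw [rel_congr_E (fun p => (EI_comm σ σ' p).symm)]
      exact (this.1 j)
    · rw [rel_congr_E (fun p => (EU_comm σ σ' p).symm)]
      exact (this.2 j)
  · exact Or.inl (noWit_rel hW)

include hO hEv hO' hEv' in
lemma partB :
    ∃ π ρ : Equiv.Perm (Fin n),
      InvSet π = InvSet σ ∩ InvSet σ' ∧ InvSet ρ = InvSet σ ∪ InvSet σ' ∧
      PO π ∧ PE π ∧ PO ρ ∧ PE ρ ∧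
      (∀ i, (π i = σ i ∧ ρ i = σ' i) ∨ (π i = σ' i ∧ ρ i = σ i)) := by
  classical
  have hTI : ∀ a b c : Fin n, S16.Rel (EI σ σ') a b → S16.Rel (EI σ σ') b c →
      S16.Rel (EI σ σ') a c :=
    S16.rel_trans_of _ (T1I σ σ') (T2I_B hO hEv hO' hEv')
  have hTU : ∀ a b c : Fin n, S16.Rel (EU σ σ') a b → S16.Rel (EU σ σ') b c →
      S16.Rel (EU σ σ') a c :=
    S16.rel_trans_of _ (T1U_B hO hEv hO' hEv') (T2U σ σ')
  refine ⟨S16.bPerm (EI σ σ') hTI, S16.bPerm (EU σ σ') hTU, ?_, ?_, ?_, ?_, ?_, ?_, ?_⟩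
  · rw [S16.bPerm_invSet hTI (fun p h => EI_lt h)]
    exact Set.ext fun p => Iff.rfl
  · rw [S16.bPerm_invSet hTU (fun p h => EU_lt h)]
    exact Set.ext fun p => Iff.rfl
  · intro p q hp hpq
    exact (S16.bPerm_lt_iff hTI).mpr
      (Or.inr ⟨hpq, ⟨hpq, hO p q hp hpq⟩, ⟨hpq, hO' p q hp hpq⟩⟩)
  · intro p q hq hqn hpq
    exact (S16.bPerm_lt_iff hTI).mpr
      (Or.inr ⟨hpq, ⟨hpq, hEv p q hq hqn hpq⟩, ⟨hpq, hEv' p q hq hqn hpq⟩⟩)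
  · intro p q hp hpq
    exact (S16.bPerm_lt_iff hTU).mpr
      (Or.inr ⟨hpq, Or.inl ⟨hpq, hO p q hp hpq⟩⟩)
  · intro p q hq hqn hpq
    exact (S16.bPerm_lt_iff hTU).mpr
      (Or.inr ⟨hpq, Or.inl ⟨hpq, hEv p q hq hqn hpq⟩⟩)
  · intro i
    rcases nestB hO hEv hO' hEv' i with ⟨e1, e2⟩ | ⟨e1, e2⟩
    · exact Or.inl ⟨S16.bPerm_eq hTI σ i e1, S16.bPerm_eq hTU σ' i e2⟩
    · exact Or.inr ⟨S16.bPerm_eq hTI σ' i e1, S16.bPerm_eq hTU σ i e2⟩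

end PartB
section Convert

variable {n : ℕ}

lemma permMatrix_entry (γ : Equiv.Perm (Fin n)) (p : Fin n × Fin n) :
    permMatrix γ p = if p.1 = γ⁻¹ p.2 then (1 : ℝ) else 0 := by
  unfold permMatrix
  by_cases h : γ p.1 = p.2
  · rw [if_pos h, if_pos (by rw [← h]; simp)]
  · rw [if_neg h, if_neg (fun hc => h (by rw [hc]; simp))]

lemma memB_PO {σ : Equiv.Perm (Fin n)} (halt : Alternating σ)
    (h123 : ¬ containsPattern σ p123) : PO σ := by
  intro p q hp hpq
  by_contra hc
  have hlt : σ p < σ q := (vtri σ (Fin.ne_of_lt hpq)).resolve_right hc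
  have hp1 : 1 ≤ (p : ℕ) := by omega
  have hjlt : (p : ℕ) - 1 + 1 < n := by have := p.isLt; omega
  have heq : (⟨(p : ℕ) - 1 + 1, hjlt⟩ : Fin n) = p := Fin.ext (by simp; omega)
  have h1 := (halt ((p : ℕ) - 1) hjlt).1 (Nat.even_iff.mpr (by omega))
  rw [heq] at h1
  refine h123 ((S16.contains123_iff σ).mpr ⟨⟨(p : ℕ) - 1, by omega⟩, p, q, ?_, hpq, h1, hlt⟩)
  rw [Fin.lt_def]
  simp
  omega

lemma memB_PE {σ : Equiv.Perm (Fin n)} (halt : Alternating σ)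
    (h123 : ¬ containsPattern σ p123) : PE σ := by
  intro p q hq hqn hpq
  by_contra hc
  have hlt : σ p < σ q := (vtri σ (Fin.ne_of_lt hpq)).resolve_right hc
  have heq : (⟨(q : ℕ), by omega⟩ : Fin n) = q := Fin.ext rfl
  have h1 := (halt (q : ℕ) hqn).1 (Nat.even_iff.mpr hq)
  rw [heq] at h1
  refine h123 ((S16.contains123_iff σ).mpr ⟨p, q, ⟨(q : ℕ) + 1, hqn⟩, hpq, ?_, hlt, h1⟩)
  rw [Fin.lt_def]
  simp

lemma avoid123_of {σ : Equiv.Perm (Fin n)} (hO : PO σ) (hEv : PE σ) :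
    ¬ containsPattern σ p123 := by
  intro hc
  obtain ⟨i, j, k, h1, h2, v1, v2⟩ := (S16.contains123_iff σ).mp hc
  rcases Nat.mod_two_eq_zero_or_one (j : ℕ) with hp | hp
  · have hjn : (j : ℕ) + 1 < n := by
      have := k.isLt; have := (Fin.lt_def).mp h2; omega
    exact absurd v1 (asymm (hEv i j hp hjn h1))
  · exact absurd v2 (asymm (hO j k hp h2))

lemma alternating_transfer {π σ : Equiv.Perm (Fin n)} (hσ : Alternating σ)
    (h : ∀ (j : ℕ) (hj : j + 1 < n),
      ((⟨j, by omega⟩ : Fin n), (⟨j + 1, hj⟩ : Fin n)) ∈ InvSet π ↔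
      ((⟨j, by omega⟩ : Fin n), (⟨j + 1, hj⟩ : Fin n)) ∈ InvSet σ) :
    Alternating π := by
  intro j hj
  have hab : (⟨j, by omega⟩ : Fin n) < ⟨j + 1, hj⟩ := by rw [Fin.lt_def]; simp
  obtain ⟨h1, h2⟩ := hσ j hj
  constructor
  · intro hev
    have hns : ((⟨j, by omega⟩ : Fin n), (⟨j + 1, hj⟩ : Fin n)) ∉ InvSet σ :=
      fun hc => asymm (h1 hev) hc.2
    have hnp : ((⟨j, by omega⟩ : Fin n), (⟨j + 1, hj⟩ : Fin n)) ∉ InvSet π :=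
      fun hc => hns ((h j hj).mp hc)
    have hne : π ⟨j, by omega⟩ ≠ π ⟨j + 1, hj⟩ :=
      fun e => (Fin.ne_of_lt hab) (π.injective e)
    rcases lt_or_gt_of_ne hne with h' | h'
    · exact h'
    · exact absurd ⟨hab, h'⟩ hnp
  · intro hod
    exact ((h j hj).mpr ⟨hab, h2 hod⟩).2

end Convert

theorem stmt16 (n : ℕ) (hn : 1 ≤ n) :
    -- Q = Av_n(132,312) with the right weak order
    (∀ σ ∈ Av132312 n, ∀ σ' ∈ Av132312 n,
      ∃ π ∈ Av132312 n, ∃ ρ ∈ Av132312 n,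
        -- π is the greatest lower bound of {σ, σ'} in Q
        (Invv π ⊆ Invv σ ∧ Invv π ⊆ Invv σ' ∧
          ∀ γ ∈ Av132312 n, Invv γ ⊆ Invv σ → Invv γ ⊆ Invv σ' → Invv γ ⊆ Invv π) ∧
        -- ρ is the least upper bound of {σ, σ'} in Q
        (Invv σ ⊆ Invv ρ ∧ Invv σ' ⊆ Invv ρ ∧
          ∀ γ ∈ Av132312 n, Invv σ ⊆ Invv γ → Invv σ' ⊆ Invv γ → Invv ρ ⊆ Invv γ) ∧
        permMatrix σ + permMatrix σ' = permMatrix π + permMatrix ρ) ∧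
    -- Q = AltAv_n(123) with the left weak order
    (∀ σ ∈ AltAv123 n, ∀ σ' ∈ AltAv123 n,
      ∃ π ∈ AltAv123 n, ∃ ρ ∈ AltAv123 n,
        (InvSet π ⊆ InvSet σ ∧ InvSet π ⊆ InvSet σ' ∧
          ∀ γ ∈ AltAv123 n, InvSet γ ⊆ InvSet σ → InvSet γ ⊆ InvSet σ' → InvSet γ ⊆ InvSet π) ∧
        (InvSet σ ⊆ InvSet ρ ∧ InvSet σ' ⊆ InvSet ρ ∧
          ∀ γ ∈ AltAv123 n, InvSet σ ⊆ InvSet γ → InvSet σ' ⊆ InvSet γ → InvSet ρ ⊆ InvSet γ) ∧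
        permMatrix σ + permMatrix σ' = permMatrix π + permMatrix ρ) := by
  constructor
  · -- Part A
    intro σ hσ σ' hσ'
    obtain ⟨h132, h312⟩ := hσ
    obtain ⟨h132', h312'⟩ := hσ'
    have hA : ¬ S16.H132 σ⁻¹ :=
      fun h => h132 ((S16.contains132_iff σ).mpr ((S16.H132_inv σ).mp h))
    have hB : ¬ S16.H231 σ⁻¹ := fun h => h312 ((S16.contains312_iff σ).mpr (by
      have := (S16.H312_inv σ⁻¹).mpr h
      rwa [inv_inv] at this))
    have hA' : ¬ S16.H132 σ'⁻¹ :=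
      fun h => h132' ((S16.contains132_iff σ').mpr ((S16.H132_inv σ').mp h))
    have hB' : ¬ S16.H231 σ'⁻¹ := fun h => h312' ((S16.contains312_iff σ').mpr (by
      have := (S16.H312_inv σ'⁻¹).mpr h
      rwa [inv_inv] at this))
    obtain ⟨π₀, ρ₀, hIπ, hIρ, mA1, mA2, mA3, mA4, hpt⟩ := partA σ⁻¹ σ'⁻¹ hA hB hA' hB'
    have eπ : Invv π₀⁻¹ = Invv σ ∩ Invv σ' := by
      rw [S16.invv_eq, inv_inv, hIπ, S16.invv_eq, S16.invv_eq]
    have eρ : Invv ρ₀⁻¹ = Invv σ ∪ Invv σ' := by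
      rw [S16.invv_eq, inv_inv, hIρ, S16.invv_eq, S16.invv_eq]
    refine ⟨π₀⁻¹, ⟨?_, ?_⟩, ρ₀⁻¹, ⟨?_, ?_⟩, ⟨?_, ?_, ?_⟩, ⟨?_, ?_, ?_⟩, ?_⟩
    · exact fun h => mA1 ((S16.H132_inv π₀).mp ((S16.contains132_iff π₀⁻¹).mp h))
    · exact fun h => mA2 ((S16.H312_inv π₀).mp ((S16.contains312_iff π₀⁻¹).mp h))
    · exact fun h => mA3 ((S16.H132_inv ρ₀).mp ((S16.contains132_iff ρ₀⁻¹).mp h))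
    · exact fun h => mA4 ((S16.H312_inv ρ₀).mp ((S16.contains312_iff ρ₀⁻¹).mp h))
    · rw [eπ]; exact Set.inter_subset_left
    · rw [eπ]; exact Set.inter_subset_right
    · intro γ _ hs1 hs2; rw [eπ]; exact Set.subset_inter hs1 hs2
    · rw [eρ]; exact Set.subset_union_left
    · rw [eρ]; exact Set.subset_union_right
    · intro γ _ hs1 hs2; rw [eρ]; exact Set.union_subset hs1 hs2
    · funext p
      simp only [Pi.add_apply]
      rw [permMatrix_entry σ, permMatrix_entry σ', permMatrix_entry π₀⁻¹,
        permMatrix_entry ρ₀⁻¹, inv_inv, inv_inv]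
      rcases hpt p.2 with ⟨e1, e2⟩ | ⟨e1, e2⟩
      · rw [e1, e2]
      · rw [e1, e2, add_comm]
  · -- Part B
    intro σ hσ σ' hσ'
    obtain ⟨halt, h123⟩ := hσ
    obtain ⟨halt', h123'⟩ := hσ'
    have hO := memB_PO halt h123
    have hEv := memB_PE halt h123
    have hO' := memB_PO halt' h123'
    have hEv' := memB_PE halt' h123'
    obtain ⟨π, ρ, hIπ, hIρ, pOπ, pEπ, pOρ, pEρ, hpt⟩ := partB hO hEv hO' hEv'
    refine ⟨π, ⟨?_, avoid123_of pOπ pEπ⟩, ρ, ⟨?_, avoid123_of pOρ pEρ⟩,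
      ⟨?_, ?_, ?_⟩, ⟨?_, ?_, ?_⟩, ?_⟩
    · refine alternating_transfer halt (fun j hj => ?_)
      constructor
      · intro h; rw [hIπ] at h; exact h.1
      · intro h
        rw [hIπ]
        refine ⟨h, h.1, ?_⟩
        rcases Nat.even_or_odd j with he | ho
        · exact absurd ((halt j hj).1 he) (asymm h.2)
        · exact (halt' j hj).2 ho
    · refine alternating_transfer halt (fun j hj => ?_)
      constructor
      · intro h
        rw [hIρ] at h
        rcases h with h | h
        · exact h
        · refine ⟨h.1, ?_⟩
          rcases Nat.even_or_odd j with he | ho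
          · exact absurd ((halt' j hj).1 he) (asymm h.2)
          · exact (halt j hj).2 ho
      · intro h; rw [hIρ]; exact Or.inl h
    · rw [hIπ]; exact Set.inter_subset_left
    · rw [hIπ]; exact Set.inter_subset_right
    · intro γ _ hs1 hs2; rw [hIπ]; exact Set.subset_inter hs1 hs2
    · rw [hIρ]; exact Set.subset_union_left
    · rw [hIρ]; exact Set.subset_union_right
    · intro γ _ hs1 hs2; rw [hIρ]; exact Set.union_subset hs1 hs2
    · funext p
      simp only [Pi.add_apply, permMatrix]
      rcases hpt p.1 with ⟨e1, e2⟩ | ⟨e1, e2⟩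
      · rw [e1, e2]
      · rw [e1, e2, add_comm]
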